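/- Let n be a natural number and v : Fin n → Fin n → ℝ a valuation matrix. For every maximum matching σ (a permutation with ∑ i, v i (σ i) ≥ ∑ i, v i (τ i) for all permutations τ), there exists a market-clearing price vector p : Fin n → ℝ such that σ is induced by p. -/

import Mathlib

/-- `σ` is induced by `p`: every buyer `i` prefers product `σ i` at prices `p`. -/
def Induced (n : ℕ) (v : Fin n → Fin n → ℝ) (p : Fin n → ℝ)
    (σ : Equiv.Perm (Fin n)) : Prop :=
  ∀ i k, v i (σ i) - p (σ i) ≥ v i k - p k

/-- `p` is market-clearing: some permutation is induced by `p`. -/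
def MarketClearing (n : ℕ) (v : Fin n → Fin n → ℝ) (p : Fin n → ℝ) : Prop :=
  ∃ σ : Equiv.Perm (Fin n), Induced n v p σ

namespace Stmt15Aux

variable {n : ℕ}

/-- Weight of a path (list of vertices) under edge weights `w`. -/
def wt (w : Fin n → Fin n → ℝ) : List (Fin n) → ℝ
  | [] => 0
  | [_] => 0
  | a :: b :: t => w a b + wt w (b :: t)

@[simp] lemma wt_nil (w : Fin n → Fin n → ℝ) : wt w [] = 0 := rfl
@[simp] lemma wt_single (w : Fin n → Fin n → ℝ) (a : Fin n) : wt w [a] = 0 := rfl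
lemma wt_cons_cons (w : Fin n → Fin n → ℝ) (a b : Fin n) (t : List (Fin n)) :
    wt w (a :: b :: t) = w a b + wt w (b :: t) := rfl

lemma wt_append (w : Fin n → Fin n → ℝ) (l : List (Fin n)) (x : Fin n) (t : List (Fin n)) :
    wt w (l ++ x :: t) = wt w (l ++ [x]) + wt w (x :: t) := by
  induction l with
  | nil => simp
  | cons a l ih =>
    cases l with
    | nil => simp [wt_cons_cons]
    | cons b l' =>
      simp only [List.cons_append, wt_cons_cons] at *
      rw [ih]; ring

lemma wt_concat (w : Fin n → Fin n → ℝ) (l : List (Fin n)) (hl : l ≠ []) (k : Fin n) :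
    wt w (l ++ [k]) = wt w l + w (l.getLast hl) k := by
  induction l with
  | nil => exact absurd rfl hl
  | cons a l ih =>
    cases l with
    | nil => simp [wt_cons_cons]
    | cons b l' =>
      simp only [List.cons_append, wt_cons_cons] at *
      rw [ih (List.cons_ne_nil _ _)]
      rw [List.getLast_cons (List.cons_ne_nil _ _)]
      ring

lemma wt_eq_sum (w : Fin n → Fin n → ℝ) (d : Fin n) (c : List (Fin n)) :
    wt w c = ∑ i ∈ Finset.range (c.length - 1), w (c.getD i d) (c.getD (i + 1) d) := by
  induction c with
  | nil => simp
  | cons a l ih =>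
    cases l with
    | nil => simp
    | cons b t =>
      rw [wt_cons_cons, ih]
      have hlen : (a :: b :: t).length - 1 = ((b :: t).length - 1) + 1 := by
        simp
      rw [hlen, Finset.sum_range_succ']
      simp [List.getD_cons_succ, List.getD_cons_zero]
      ring

end Stmt15Aux

namespace Stmt15Aux

lemma cycle_le (w : Fin n → Fin n → ℝ) (h0 : ∀ j, w j j = 0)
    (hperm : ∀ π : Equiv.Perm (Fin n), ∑ j, w j (π j) ≤ 0)
    (c : List (Fin n)) (hc : c ≠ []) (hnd : c.Nodup) :
    wt w c + w (c.getLast hc) (c.head hc) ≤ 0 := by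
  set d := c.head hc with hd
  set π := c.formPerm with hπ
  have key : ∑ j, w j (π j) ≤ 0 := hperm _
  have hlenpos : 0 < c.length := List.length_pos_iff.mpr hc
  have h1 : ∑ j ∈ c.toFinset, w j (π j) = ∑ j, w j (π j) := by
    refine Finset.sum_subset (Finset.subset_univ _) ?_
    intro j _ hj
    rw [List.formPerm_apply_of_notMem (by simpa using hj), h0]
  have h2 : ∑ j ∈ c.toFinset, w j (π j)
      = ∑ i ∈ Finset.range c.length, w (c.getD i d) (π (c.getD i d)) := by
    refine (Finset.sum_nbij' (fun x => c.idxOf x) (fun i => c.getD i d) ?_ ?_ ?_ ?_ ?_).symm.symm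
    · intro x hx
      simp only [Finset.mem_range]
      exact List.idxOf_lt_length_iff.mpr (by simpa using hx)
    · intro i hi
      simp only [Finset.mem_range] at hi
      rw [List.getD_eq_getElem _ _ hi]
      simp [List.getElem_mem hi]
    · intro x hx
      have hx' : x ∈ c := by simpa using hx
      rw [List.getD_eq_getElem _ _ (List.idxOf_lt_length_iff.mpr hx')]
      exact List.getElem_idxOf _
    · intro i hi
      simp only [Finset.mem_range] at hi
      rw [List.getD_eq_getElem _ _ hi]
      exact List.Nodup.idxOf_getElem hnd _ _
    · intro x hx
      have hx' : x ∈ c := by simpa using hx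
      rw [List.getD_eq_getElem _ _ (List.idxOf_lt_length_iff.mpr hx'), List.getElem_idxOf (List.idxOf_lt_length_iff.mpr hx')]
  have h3 : ∀ i ∈ Finset.range c.length,
      w (c.getD i d) (π (c.getD i d)) = w (c.getD i d) (c.getD ((i + 1) % c.length) d) := by
    intro i hi
    simp only [Finset.mem_range] at hi
    rw [List.getD_eq_getElem _ _ hi, hπ, List.formPerm_apply_getElem _ hnd _ hi,
      List.getD_eq_getElem _ _ (Nat.mod_lt _ hlenpos)]
  have h4 : ∑ i ∈ Finset.range c.length, w (c.getD i d) (c.getD ((i + 1) % c.length) d)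
      = wt w c + w (c.getLast hc) (c.head hc) := by
    obtain ⟨m, hm⟩ : ∃ m, c.length = m + 1 := ⟨c.length - 1, by omega⟩
    rw [hm, Finset.sum_range_succ]
    have e1 : ∀ i ∈ Finset.range m,
        w (c.getD i d) (c.getD ((i + 1) % (m + 1)) d) = w (c.getD i d) (c.getD (i + 1) d) := by
      intro i hi
      simp only [Finset.mem_range] at hi
      rw [Nat.mod_eq_of_lt (by omega)]
    rw [Finset.sum_congr rfl e1]
    have e2 : wt w c = ∑ i ∈ Finset.range m, w (c.getD i d) (c.getD (i + 1) d) := by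
      rw [wt_eq_sum w d c, hm]; norm_num
    rw [e2, Nat.mod_self]
    have hlast : c.getD m d = c.getLast hc := by
      rw [List.getD_eq_getElem _ _ (by omega)]
      simp only [List.getLast_eq_getElem, hm, Nat.add_sub_cancel]
    have hhead : c.getD 0 d = c.head hc := by
      rw [List.getD_eq_getElem _ _ hlenpos, ← List.head_eq_getElem_zero hc]
    rw [hlast, hhead]
  calc wt w c + w (c.getLast hc) (c.head hc) = ∑ j, w j (π j) := by rw [← h1, h2, Finset.sum_congr rfl h3, h4]
  _ ≤ 0 := key

end Stmt15Aux

namespace Stmt15Aux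

lemma exists_potential (w : Fin n → Fin n → ℝ) (h0 : ∀ j, w j j = 0)
    (hperm : ∀ π : Equiv.Perm (Fin n), ∑ j, w j (π j) ≤ 0) :
    ∃ p : Fin n → ℝ, ∀ j k, p k ≥ p j + w j k := by
  classical
  have hcyc := cycle_le w h0 hperm
  set S : Fin n → Finset {l : List (Fin n) // l.Nodup} :=
    fun k => Finset.univ.filter (fun l => l.1.getLast? = some k) with hS
  have hne : ∀ k, (S k).Nonempty := fun k =>
    ⟨⟨[k], List.nodup_singleton k⟩, by simp [hS]⟩
  refine ⟨fun k => (S k).sup' (hne k) (fun l => wt w l.1), ?_⟩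
  intro j k
  obtain ⟨l, hlS, hpj⟩ := Finset.exists_mem_eq_sup' (hne j) (fun l => wt w l.1)
  have hnd : l.1.Nodup := l.2
  have hlast? : l.1.getLast? = some j := by simpa [hS] using hlS
  have hlnil : l.1 ≠ [] := by intro h; rw [h] at hlast?; simp at hlast?
  have hlast : l.1.getLast hlnil = j := by
    rw [List.getLast?_eq_getLast_of_ne_nil hlnil] at hlast?
    exact Option.some.inj hlast?
  dsimp only
  rw [hpj]
  by_cases hk : k ∈ l.1
  · obtain ⟨l₁, l₂, hsplit⟩ := List.append_of_mem hk
    have hnd' : (l₁ ++ k :: l₂).Nodup := hsplit ▸ hnd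
    obtain ⟨hnd₁, hnd₂, hdisj⟩ := List.nodup_append'.mp hnd'
    have hkl₁ : k ∉ l₁ := fun h => hdisj h List.mem_cons_self
    have h1 : (l₁ ++ [k]).Nodup :=
      List.Nodup.append hnd₁ (List.nodup_singleton k)
        (fun a ha hb => by simp at hb; exact hkl₁ (hb ▸ ha))
    have hmem : (⟨l₁ ++ [k], h1⟩ : {l : List (Fin n) // l.Nodup}) ∈ S k := by
      simp [hS, List.getLast?_concat]
    have hle := Finset.le_sup' (f := fun l : {l : List (Fin n) // l.Nodup} => wt w l.1) hmem
    have hsp : wt w l.1 = wt w (l₁ ++ [k]) + wt w (k :: l₂) := by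
      rw [hsplit]; exact wt_append w l₁ k l₂
    have hlast2 : (k :: l₂).getLast (List.cons_ne_nil _ _) = j := by
      have : (l₁ ++ k :: l₂).getLast? = (k :: l₂).getLast? :=
        List.getLast?_append_of_ne_nil l₁ (List.cons_ne_nil _ _)
      rw [← hsplit, hlast?] at this
      rw [List.getLast?_eq_getLast_of_ne_nil (List.cons_ne_nil _ _)] at this
      exact (Option.some.inj this).symm
    have hcyc' := hcyc (k :: l₂) (List.cons_ne_nil _ _) hnd₂
    rw [hlast2, List.head_cons] at hcyc'
    dsimp only at hle ⊢
    linarith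
  · have h1 : (l.1 ++ [k]).Nodup :=
      List.Nodup.append hnd (List.nodup_singleton k)
        (fun a ha hb => by simp at hb; exact hk (hb ▸ ha))
    have hmem : (⟨l.1 ++ [k], h1⟩ : {l : List (Fin n) // l.Nodup}) ∈ S k := by
      simp [hS, List.getLast?_concat]
    have hle := Finset.le_sup' (f := fun l : {l : List (Fin n) // l.Nodup} => wt w l.1) hmem
    have heq : wt w (l.1 ++ [k]) = wt w l.1 + w j k := by
      rw [wt_concat w l.1 hlnil k, hlast]
    dsimp only at hle ⊢
    linarith

end Stmt15Aux

/-- Every maximum matching is induced by some market-clearing price vector. -/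
theorem stmt_15 (n : ℕ) (v : Fin n → Fin n → ℝ) (σ : Equiv.Perm (Fin n))
    (hσ : ∀ τ : Equiv.Perm (Fin n), ∑ i, v i (σ i) ≥ ∑ i, v i (τ i)) :
    ∃ p : Fin n → ℝ, MarketClearing n v p ∧ Induced n v p σ := by
  classical
  set w : Fin n → Fin n → ℝ := fun j k => v (σ.symm j) k - v (σ.symm j) j with hw
  have h0 : ∀ j, w j j = 0 := by intro j; simp [hw]
  have hperm : ∀ π : Equiv.Perm (Fin n), ∑ j, w j (π j) ≤ 0 := by
    intro π
    have e1 : ∑ j, v (σ.symm j) (π j) = ∑ i, v i ((π * σ) i) := by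
      rw [← Equiv.sum_comp σ (fun j => v (σ.symm j) (π j))]
      simp [Equiv.Perm.mul_apply]
    have e2 : ∑ j, v (σ.symm j) j = ∑ i, v i (σ i) := by
      rw [← Equiv.sum_comp σ (fun j => v (σ.symm j) j)]
      simp
    have hle := hσ (π * σ)
    simp only [hw, Finset.sum_sub_distrib, e1, e2]
    linarith
  obtain ⟨p, hp⟩ := Stmt15Aux.exists_potential w h0 hperm
  have hind : Induced n v p σ := by
    intro i k
    have h := hp (σ i) k
    simp only [hw, Equiv.symm_apply_apply] at h
    unfold Induced at *
    linarith
  exact ⟨p, ⟨σ, hind⟩, hind⟩
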